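/- For every integer k ≥ 2 there exist 2k compact convex sets in ℝ² such that no point of the plane is contained in more than k of them, yet no two of the sets together contain all points covered by at least k of the sets. -/

import Mathlib

open scoped Classical

noncomputable section TwoKSection

namespace TwoK

/-- vertices on the parabola -/
def vfun (m : ℕ) : ℝ × ℝ := ((m : ℝ), (m : ℝ)^2)

/-- cyclic window of `k` consecutive vertices starting at `t`, inside `Z_{2k-1}` -/
def Wset (k t : ℕ) : Finset ℕ :=
  if t < k then Finset.Icc t (t + k - 1)
  else Finset.Icc t (2*k - 2) ∪ Finset.Icc 0 (t - k)

/-- the cap: convex hull of the window vertices -/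
def capS (k t : ℕ) : Set (ℝ × ℝ) := convexHull ℝ (((Wset k t).image vfun : Finset (ℝ × ℝ)) : Set (ℝ × ℝ))

/-- edge midpoints (edge e joins v_e to v_{e+1}; edge 2k-2 joins v_{2k-2} to v_0) -/
def qfun (k e : ℕ) : ℝ × ℝ :=
  if e < 2*k - 2 then (((e:ℝ) + ((e:ℝ)+1))/2, ((e:ℝ)^2 + ((e:ℝ)+1)^2)/2)
  else ((((2*k-2 : ℕ)) : ℝ)/2, ((((2*k-2 : ℕ)) : ℝ))^2/2)

/-- the "disk" replacement: hull of all edge midpoints -/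
def DD (k : ℕ) : Set (ℝ × ℝ) :=
  convexHull ℝ ((((Finset.range (2*k-1)).image (qfun k) : Finset (ℝ × ℝ))) : Set (ℝ × ℝ))

/-- the family -/
def Fam (k : ℕ) (i : Fin (2*k)) : Set (ℝ × ℝ) :=
  if (i : ℕ) < 2*k - 1 then capS k i else DD k

lemma isCompact_capS (k t : ℕ) : IsCompact (capS k t) :=
  ((Wset k t).image vfun).finite_toSet.isCompact_convexHull ℝ

lemma isCompact_DD (k : ℕ) : IsCompact (DD k) :=
  ((Finset.range (2*k-1)).image (qfun k)).finite_toSet.isCompact_convexHull ℝ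

lemma convex_capS (k t : ℕ) : Convex ℝ (capS k t) := convex_convexHull _ _
lemma convex_DD (k : ℕ) : Convex ℝ (DD k) := convex_convexHull _ _

/-- generic halfplane convexity -/
lemma convex_half (a b c : ℝ) : Convex ℝ {p : ℝ × ℝ | a * p.1 + b * p.2 ≤ c} := by
  intro p hp q hq s t hs ht hst
  simp only [Set.mem_setOf_eq] at *
  have : a * (s * p.1 + t * q.1) + b * (s * p.2 + t * q.2)
      = s * (a * p.1 + b * p.2) + t * (a * q.1 + b * q.2) := by ring
  have h1 : (s • p + t • q).1 = s * p.1 + t * q.1 := by simp [Prod.smul_def, smul_eq_mul]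
  have h2 : (s • p + t • q).2 = s * p.2 + t * q.2 := by simp [Prod.smul_def, smul_eq_mul]
  rw [h1, h2]
  have hc : s * c + t * c = c := by rw [← add_mul, hst, one_mul]
  nlinarith [mul_le_mul_of_nonneg_left hp hs, mul_le_mul_of_nonneg_left hq ht, hc]

/-- shifted parabola epigraph convexity -/
lemma convex_epi (c : ℝ) : Convex ℝ {p : ℝ × ℝ | p.1^2 + c ≤ p.2} := by
  intro p hp q hq s t hs ht hst
  simp only [Set.mem_setOf_eq] at *
  have h1 : (s • p + t • q).1 = s * p.1 + t * q.1 := by simp [Prod.smul_def, smul_eq_mul]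
  have h2 : (s • p + t • q).2 = s * p.2 + t * q.2 := by simp [Prod.smul_def, smul_eq_mul]
  rw [h1, h2]
  have hc : s * c + t * c = c := by rw [← add_mul, hst, one_mul]
  nlinarith [mul_nonneg (mul_nonneg hs ht) (sq_nonneg (p.1 - q.1)),
    mul_le_mul_of_nonneg_left hp hs, mul_le_mul_of_nonneg_left hq ht, hc, sq_nonneg (s+t)]

lemma cap_subset {k t : ℕ} {s : Set (ℝ × ℝ)} (hs : Convex ℝ s)
    (h : ∀ m ∈ Wset k t, vfun m ∈ s) : capS k t ⊆ s := by
  apply convexHull_min _ hs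
  intro p hp
  simp only [Finset.coe_image, Set.mem_image, Finset.mem_coe] at hp
  obtain ⟨m, hm, rfl⟩ := hp
  exact h m hm

lemma DD_subset {k : ℕ} {s : Set (ℝ × ℝ)} (hs : Convex ℝ s)
    (h : ∀ e < 2*k-1, qfun k e ∈ s) : DD k ⊆ s := by
  apply convexHull_min _ hs
  intro p hp
  simp only [Finset.coe_image, Set.mem_image, Finset.mem_coe, Finset.mem_range] at hp
  obtain ⟨m, hm, rfl⟩ := hp
  exact h m hm

end TwoK
-- subset lemmas: caps inside halfplanes
namespace TwoK

variable {k t : ℕ}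

lemma mem_Wset_lt (hk : 2 ≤ k) (ht : t < 2*k-1) {m : ℕ} (hm : m ∈ Wset k t) : m < 2*k-1 := by
  unfold Wset at hm
  split at hm <;> simp [Finset.mem_Icc, Finset.mem_union] at hm <;> omega

/-- strip lower bound, non-wrapping caps -/
lemma cap_strip_lo (hk : 2 ≤ k) (ht : t < k) : capS k t ⊆ {p : ℝ × ℝ | (t:ℝ) ≤ p.1} := by
  have : {p : ℝ × ℝ | (t:ℝ) ≤ p.1} = {p : ℝ × ℝ | (-1) * p.1 + 0 * p.2 ≤ -(t:ℝ)} := by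
    ext p; constructor <;> intro h <;> simp at * <;> linarith
  rw [this]
  apply cap_subset (convex_half _ _ _)
  intro m hm
  simp only [Wset, if_pos ht, Finset.mem_Icc] at hm
  have : (t:ℝ) ≤ (m:ℝ) := by exact_mod_cast hm.1
  simp [vfun]; linarith

/-- strip upper bound, non-wrapping caps -/
lemma cap_strip_hi (hk : 2 ≤ k) (ht : t < k) :
    capS k t ⊆ {p : ℝ × ℝ | p.1 ≤ (t:ℝ) + k - 1} := by
  have : {p : ℝ × ℝ | p.1 ≤ (t:ℝ) + k - 1} = {p : ℝ × ℝ | 1 * p.1 + 0 * p.2 ≤ (t:ℝ) + k - 1} := by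
    ext p; simp
  rw [this]
  apply cap_subset (convex_half _ _ _)
  intro m hm
  simp only [Wset, if_pos ht, Finset.mem_Icc] at hm
  have h1 : m + 1 ≤ t + k := by omega
  have : (m:ℝ) + 1 ≤ (t:ℝ) + k := by exact_mod_cast h1
  simp [vfun]; linarith

/-- top chord, non-wrapping caps -/
lemma cap_top (hk : 2 ≤ k) (ht : t < k) :
    capS k t ⊆ {p : ℝ × ℝ | p.2 ≤ (2*(t:ℝ) + k - 1) * p.1 - (t:ℝ) * ((t:ℝ) + k - 1)} := by
  have : {p : ℝ × ℝ | p.2 ≤ (2*(t:ℝ) + k - 1) * p.1 - (t:ℝ) * ((t:ℝ) + k - 1)}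
      = {p : ℝ × ℝ | (-(2*(t:ℝ) + k - 1)) * p.1 + 1 * p.2 ≤ -((t:ℝ) * ((t:ℝ) + k - 1))} := by
    ext p; constructor <;> intro h <;> simp at * <;> linarith
  rw [this]
  apply cap_subset (convex_half _ _ _)
  intro m hm
  simp only [Wset, if_pos ht, Finset.mem_Icc] at hm
  have h0 : (t:ℝ) ≤ (m:ℝ) := by exact_mod_cast hm.1
  have h1 : m + 1 ≤ t + k := by omega
  have h2 : (m:ℝ) + 1 ≤ (t:ℝ) + k := by exact_mod_cast h1
  simp only [vfun, Set.mem_setOf_eq]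
  nlinarith [mul_nonneg (by linarith : (0:ℝ) ≤ (m:ℝ) - t) (by linarith : (0:ℝ) ≤ (t:ℝ) + k - 1 - m)]

/-- bottom chord, wrapping caps -/
lemma cap_bot (hk : 2 ≤ k) (ht : k ≤ t) (ht2 : t < 2*k-1) :
    capS k t ⊆ {p : ℝ × ℝ | (2*(t:ℝ) - k) * p.1 - ((t:ℝ) - k) * (t:ℝ) ≤ p.2} := by
  have : {p : ℝ × ℝ | (2*(t:ℝ) - k) * p.1 - ((t:ℝ) - k) * (t:ℝ) ≤ p.2}
      = {p : ℝ × ℝ | (2*(t:ℝ) - k) * p.1 + (-1) * p.2 ≤ ((t:ℝ) - k) * (t:ℝ)} := by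
    ext p; constructor <;> intro h <;> simp at * <;> linarith
  rw [this]
  apply cap_subset (convex_half _ _ _)
  intro m hm
  simp only [Wset, if_neg (by omega : ¬ t < k), Finset.mem_union, Finset.mem_Icc] at hm
  simp only [vfun, Set.mem_setOf_eq]
  rcases hm with h | h
  · have h0 : (t:ℝ) ≤ (m:ℝ) := by exact_mod_cast h.1
    have hkt : (k:ℝ) ≤ (t:ℝ) := by exact_mod_cast ht
    nlinarith [mul_nonneg (by linarith : (0:ℝ) ≤ (m:ℝ) - ((t:ℝ) - k)) (by linarith : (0:ℝ) ≤ (m:ℝ) - t)]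
  · have h1 : m + k ≤ t := by omega
    have h0 : (m:ℝ) + k ≤ (t:ℝ) := by exact_mod_cast h1
    have h2 : (m:ℝ) ≤ (t:ℝ) := by nlinarith [Nat.cast_nonneg (α := ℝ) k]
    nlinarith [mul_nonneg (by linarith : (0:ℝ) ≤ ((t:ℝ) - k) - m) (by linarith : (0:ℝ) ≤ (t:ℝ) - m)]

/-- D is in the shifted epigraph -/
lemma DD_epi (hk : 2 ≤ k) : DD k ⊆ {p : ℝ × ℝ | p.1^2 + 1/4 ≤ p.2} := by
  apply DD_subset (convex_epi _)
  intro e he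
  unfold qfun
  split
  · simp only [Set.mem_setOf_eq]; ring_nf; nlinarith [sq_nonneg ((e:ℝ))]
  · simp only [Set.mem_setOf_eq]
    have h2 : ((2*k-2 : ℕ) : ℝ) = 2*(k:ℝ) - 2 := by
      have : (2*k-2) + 2 = 2*k := by omega
      have := congrArg (fun n : ℕ => (n:ℝ)) this
      push_cast at this; linarith
    rw [h2]
    have hk' : (2:ℝ) ≤ (k:ℝ) := by exact_mod_cast hk
    nlinarith [sq_nonneg (2*(k:ℝ) - 2)]

end TwoK
namespace TwoK

variable {k t m e : ℕ}

lemma mid_mem {s : Set (ℝ × ℝ)} (hs : Convex ℝ s) {x y : ℝ × ℝ} (hx : x ∈ s) (hy : y ∈ s) :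
    ((1:ℝ)/2) • x + ((1:ℝ)/2) • y ∈ s :=
  hs hx hy (by norm_num) (by norm_num) (by norm_num)

lemma vertex_mem (h : m ∈ Wset k t) : vfun m ∈ capS k t := by
  apply subset_convexHull
  simp only [Finset.coe_image, Set.mem_image, Finset.mem_coe]
  exact ⟨m, h, rfl⟩

lemma qfun_eq_mid (hk : 2 ≤ k) (he : e < 2*k-2) :
    qfun k e = ((1:ℝ)/2) • vfun e + ((1:ℝ)/2) • vfun (e+1) := by
  unfold qfun vfun
  rw [if_pos he]
  have : ((e+1 : ℕ) : ℝ) = (e:ℝ) + 1 := by push_cast; ring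
  apply Prod.ext <;> simp [this, Prod.smul_def, smul_eq_mul] <;> ring

lemma qfun_eq_mid' (hk : 2 ≤ k) :
    qfun k (2*k-2) = ((1:ℝ)/2) • vfun 0 + ((1:ℝ)/2) • vfun (2*k-2) := by
  unfold qfun vfun
  rw [if_neg (by omega)]
  apply Prod.ext <;> simp [Prod.smul_def, smul_eq_mul] <;> ring

lemma edge_mem_of (hk : 2 ≤ k) (he : e < 2*k-2) (h1 : e ∈ Wset k t) (h2 : e+1 ∈ Wset k t) :
    qfun k e ∈ capS k t := by
  rw [qfun_eq_mid hk he]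
  exact mid_mem (convex_capS k t) (vertex_mem h1) (vertex_mem h2)

lemma edge_mem_of' (hk : 2 ≤ k) (h1 : 0 ∈ Wset k t) (h2 : 2*k-2 ∈ Wset k t) :
    qfun k (2*k-2) ∈ capS k t := by
  rw [qfun_eq_mid' hk]
  exact mid_mem (convex_capS k t) (vertex_mem h1) (vertex_mem h2)

lemma vertex_not_mem (hk : 2 ≤ k) (ht : t < 2*k-1) (hm : m < 2*k-1) (h : m ∉ Wset k t) :
    vfun m ∉ capS k t := by
  intro hmem
  by_cases htk : t < k
  · simp only [Wset, if_pos htk, Finset.mem_Icc] at h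
    push_neg at h
    rcases Nat.lt_or_ge m t with hc | hc
    · have := cap_strip_lo hk htk hmem
      simp only [Set.mem_setOf_eq, vfun] at this
      have : (m:ℝ) < (t:ℝ) := by exact_mod_cast hc
      linarith [cap_strip_lo hk htk hmem]
    · have h2 : t + k ≤ m := by omega
      have h2' : (t:ℝ) + k ≤ (m:ℝ) := by exact_mod_cast h2
      have := cap_strip_hi hk htk hmem
      simp only [Set.mem_setOf_eq, vfun] at this
      linarith
  · simp only [Wset, if_neg htk, Finset.mem_union, Finset.mem_Icc] at h
    push_neg at h
    have hb1 : t - k < m := by omega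
    have hb2 : m < t := by omega
    have := cap_bot hk (by omega) ht hmem
    simp only [Set.mem_setOf_eq, vfun] at this
    have c1 : (t:ℝ) - k < (m:ℝ) := by
      have : (t - k : ℕ) < m := hb1
      have h' : ((t - k : ℕ) : ℝ) < (m:ℝ) := by exact_mod_cast this
      have h'' : ((t - k : ℕ) : ℝ) = (t:ℝ) - k := by
        have : (t - k) + k = t := by omega
        have := congrArg (fun n : ℕ => (n:ℝ)) this
        push_cast at this; linarith
      linarith
    have c2 : (m:ℝ) < (t:ℝ) := by exact_mod_cast hb2
    nlinarith [mul_pos (by linarith : (0:ℝ) < (m:ℝ) - ((t:ℝ) - k)) (by linarith : (0:ℝ) < (t:ℝ) - m)]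

/-- the set of edges fully inside the window of cap `t` -/
def ISet (k t : ℕ) : Finset ℕ :=
  if t < k then Finset.Icc t (t+k-2)
  else Finset.Icc t (2*k-3) ∪ {2*k-2} ∪ (if t ≤ k then (∅ : Finset ℕ) else Finset.Icc 0 (t-k-1))

lemma edge_not_mem (hk : 2 ≤ k) (ht : t < 2*k-1) (he : e < 2*k-1) (h : e ∉ ISet k t) :
    qfun k e ∉ capS k t := by
  intro hmem
  by_cases htk : t < k
  · -- non-wrapping cap
    simp only [ISet, if_pos htk, Finset.mem_Icc] at h
    push_neg at h
    by_cases he2 : e < 2*k-2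
    · -- ordinary edge: excluded by the strip
      have hx : (qfun k e).1 = (e:ℝ) + 1/2 := by
        unfold qfun; rw [if_pos he2]; norm_num; ring
      rcases Nat.lt_or_ge e t with hc | hc
      · have hst := cap_strip_lo hk htk hmem
        simp only [Set.mem_setOf_eq, hx] at hst
        have : (e:ℝ) + 1 ≤ (t:ℝ) := by exact_mod_cast hc
        linarith
      · have hge : t + k - 1 ≤ e := by omega
        have hge' : (t:ℝ) + k ≤ (e:ℝ) + 1 := by
          have : t + k ≤ e + 1 := by omega
          exact_mod_cast this
        have := cap_strip_hi hk htk hmem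
        simp only [Set.mem_setOf_eq] at this
        rw [hx] at this
        linarith
    · -- apex edge: excluded by the top chord
      have hee : e = 2*k-2 := by omega
      have hq : qfun k e = ((2*(k:ℝ)-2)/2, (2*(k:ℝ)-2)^2/2) := by
        unfold qfun; rw [if_neg (by omega)]
        have h2 : ((2*k-2 : ℕ) : ℝ) = 2*(k:ℝ) - 2 := by
          have : (2*k-2) + 2 = 2*k := by omega
          have := congrArg (fun n : ℕ => (n:ℝ)) this
          push_cast at this; linarith
        rw [h2]
      have := cap_top hk htk hmem
      simp only [Set.mem_setOf_eq, hq] at this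
      have htr : (t:ℝ) ≤ (k:ℝ) - 1 := by
        have : t + 1 ≤ k := by omega
        have h' : (t:ℝ) + 1 ≤ (k:ℝ) := by exact_mod_cast this
        linarith
      have ht0 : (0:ℝ) ≤ (t:ℝ) := Nat.cast_nonneg t
      have hk' : (2:ℝ) ≤ (k:ℝ) := by exact_mod_cast hk
      nlinarith [sq_nonneg ((k:ℝ) - 1 - 2*(t:ℝ)), sq_nonneg ((k:ℝ)-1)]
  · -- wrapping cap
    have htlo : k ≤ t := by omega
    have hb : t - k ≤ e ∧ e < t ∧ e ≠ 2*k-2 := by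
      by_cases htk2 : t ≤ k
      · simp only [ISet, if_neg htk, if_pos htk2, Finset.union_empty, Finset.mem_union,
          Finset.mem_Icc, Finset.mem_singleton] at h
        omega
      · simp only [ISet, if_neg htk, if_neg htk2, Finset.mem_union, Finset.mem_Icc,
          Finset.mem_singleton] at h
        omega
    obtain ⟨hb1, hb2, hb3⟩ := hb
    have he2 : e < 2*k-2 := by omega
    have hx : (qfun k e).1 = (e:ℝ) + 1/2 := by
      unfold qfun; rw [if_pos he2]; norm_num; ring
    have hy : (qfun k e).2 = ((e:ℝ)+1/2)^2 + 1/4 := by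
      unfold qfun; rw [if_pos he2]; norm_num; ring
    have := cap_bot hk htlo ht hmem
    simp only [Set.mem_setOf_eq, hx, hy] at this
    have c1 : (t:ℝ) - k ≤ (e:ℝ) := by
      have h' : ((t - k : ℕ) : ℝ) ≤ (e:ℝ) := by exact_mod_cast hb1
      have h'' : ((t - k : ℕ) : ℝ) = (t:ℝ) - k := by
        have : (t - k) + k = t := by omega
        have := congrArg (fun n : ℕ => (n:ℝ)) this
        push_cast at this; linarith
      linarith
    have c2 : (e:ℝ) + 1 ≤ (t:ℝ) := by exact_mod_cast hb2
    have hk' : (2:ℝ) ≤ (k:ℝ) := by exact_mod_cast hk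
    nlinarith [mul_nonneg (by linarith : (0:ℝ) ≤ (e:ℝ) + 1/2 - ((t:ℝ) - k) - 1/2)
        (by linarith : (0:ℝ) ≤ (t:ℝ) - ((e:ℝ) + 1/2) - 1/2)]

lemma qfun_not_mem_DD_of_vertex (hk : 2 ≤ k) (m : ℕ) : vfun m ∉ DD k := by
  intro h
  have := DD_epi hk h
  simp only [Set.mem_setOf_eq, vfun] at this
  linarith

lemma card_Wset_le (hk : 2 ≤ k) (ht : t < 2*k-1) : (Wset k t).card ≤ k := by
  unfold Wset
  split
  · rw [Nat.card_Icc]; omega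
  · calc (Finset.Icc t (2*k-2) ∪ Finset.Icc 0 (t-k)).card
        ≤ (Finset.Icc t (2*k-2)).card + (Finset.Icc 0 (t-k)).card := Finset.card_union_le _ _
      _ ≤ k := by rw [Nat.card_Icc, Nat.card_Icc]; omega

lemma card_ISet_le (hk : 2 ≤ k) (ht : t < 2*k-1) : (ISet k t).card ≤ k - 1 := by
  unfold ISet
  split
  · rw [Nat.card_Icc]; omega
  · calc (Finset.Icc t (2*k-3) ∪ {2*k-2} ∪ (if t ≤ k then (∅ : Finset ℕ) else Finset.Icc 0 (t-k-1))).card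
        ≤ (Finset.Icc t (2*k-3) ∪ {2*k-2}).card
          + (if t ≤ k then (∅ : Finset ℕ) else Finset.Icc 0 (t-k-1)).card := Finset.card_union_le _ _
      _ ≤ (Finset.Icc t (2*k-3)).card + ({2*k-2} : Finset ℕ).card
          + (if t ≤ k then (∅ : Finset ℕ) else Finset.Icc 0 (t-k-1)).card := by
            gcongr; exact Finset.card_union_le _ _
      _ ≤ k - 1 := by
          rw [Nat.card_Icc, Finset.card_singleton]
          split
          · simp; omega
          · rw [Nat.card_Icc]; omega

end TwoK
namespace TwoK

variable {k : ℕ}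

lemma count_caps_core (hk : 2 ≤ k) (x : ℝ × ℝ) :
    ((Finset.range (2*k-1)).filter (fun t => x ∈ capS k t)).card ≤ k ∧
    (x.1^2 < x.2 → ((Finset.range (2*k-1)).filter (fun t => x ∈ capS k t)).card ≤ k - 1) := by
  classical
  set A := (Finset.range k).filter (fun t => x ∈ capS k t) with hA
  set B := (Finset.Icc k (2*k-2)).filter (fun t => x ∈ capS k t) with hB
  have hsplit : (Finset.range (2*k-1)).filter (fun t => x ∈ capS k t) = A ∪ B := by
    rw [hA, hB, ← Finset.filter_union]
    congr 1
    ext a; simp only [Finset.mem_range, Finset.mem_union, Finset.mem_Icc]; omega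
  have hdisj : Disjoint A B := by
    rw [Finset.disjoint_left]; intro a ha hb
    rw [hA, Finset.mem_filter, Finset.mem_range] at ha
    rw [hB, Finset.mem_filter, Finset.mem_Icc] at hb
    omega
  set B' := B.image (fun t => t - k) with hB'
  have hBcard : B'.card = B.card := Finset.card_image_of_injOn (by
    intro a ha b hb hab
    have ha' : a ∈ B := ha
    have hb' : b ∈ B := hb
    rw [hB, Finset.mem_filter, Finset.mem_Icc] at ha' hb'
    simp only at hab; omega)
  -- facts
  have hAfact : ∀ t ∈ A, t < k ∧ (t:ℝ) ≤ x.1 ∧ x.1 ≤ (t:ℝ) + k - 1 ∧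
      x.2 ≤ (2*(t:ℝ) + k - 1) * x.1 - (t:ℝ) * ((t:ℝ) + k - 1) := by
    intro t ht
    rw [hA, Finset.mem_filter, Finset.mem_range] at ht
    exact ⟨ht.1, cap_strip_lo hk ht.1 ht.2, cap_strip_hi hk ht.1 ht.2, cap_top hk ht.1 ht.2⟩
  have hBfact : ∀ τ ∈ B', τ ≤ k - 2 ∧
      (2*(τ:ℝ) + k) * x.1 - (τ:ℝ) * ((τ:ℝ) + k) ≤ x.2 := by
    intro τ hτ
    rw [hB', Finset.mem_image] at hτ
    obtain ⟨t, ht, rfl⟩ := hτ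
    rw [hB, Finset.mem_filter, Finset.mem_Icc] at ht
    refine ⟨by omega, ?_⟩
    have hb := cap_bot hk ht.1.1 (by omega) ht.2
    simp only [Set.mem_setOf_eq] at hb
    have hcast : ((t - k : ℕ) : ℝ) = (t:ℝ) - k := by
      have h1 : (t - k) + k = t := by omega
      have h2 := congrArg (fun n : ℕ => (n:ℝ)) h1
      push_cast at h2; linarith
    rw [hcast]
    nlinarith [hb]
  have hsub : A ∪ B' ⊆ Finset.range k := by
    intro a ha
    rcases Finset.mem_union.mp ha with h | h
    · exact Finset.mem_range.mpr (hAfact a h).1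
    · exact Finset.mem_range.mpr (by have := (hBfact a h).1; omega)
  -- intersection elements force x to be a vertex
  have hinter : ∀ τ ∈ A ∩ B', (τ:ℝ) = x.1 ∧ x.2 = x.1^2 := by
    intro τ hτ
    obtain ⟨h1, h2⟩ := Finset.mem_inter.mp hτ
    obtain ⟨_, ha1, ha2, ha3⟩ := hAfact τ h1
    obtain ⟨_, hb1⟩ := hBfact τ h2
    have hx1 : (τ:ℝ) = x.1 := by nlinarith
    refine ⟨hx1, by nlinarith⟩
  constructor
  · -- general bound
    rw [hsplit, Finset.card_union_of_disjoint hdisj, ← hBcard]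
    have hci : (A ∩ B').card ≤ 1 := by
      apply Finset.card_le_one.mpr
      intro a ha b hb
      have h1 := (hinter a ha).1
      have h2 := (hinter b hb).1
      exact Nat.cast_injective (by rw [h1, h2])
    rcases Finset.eq_empty_or_nonempty (A ∩ B') with hemp | ⟨τ0, hτ0⟩
    · have := Finset.card_union_add_card_inter A B'
      have h2 : (A ∪ B').card ≤ k := le_trans (Finset.card_le_card hsub) (by simp)
      rw [hemp] at this; simp at this; omega
    · -- vertex case : everything fits in range (k-1)
      have hτ0' := hinter τ0 hτ0
      have hτ0k : τ0 ≤ k - 2 := (hBfact τ0 (Finset.mem_inter.mp hτ0).2).1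
      have hsub2 : A ∪ B' ⊆ Finset.range (k-1) := by
        intro a ha
        rcases Finset.mem_union.mp ha with h | h
        · obtain ⟨_, ha1, _, _⟩ := hAfact a h
          have : (a:ℝ) ≤ (τ0:ℝ) := by rw [hτ0'.1]; exact ha1
          have : a ≤ τ0 := by exact_mod_cast this
          exact Finset.mem_range.mpr (by omega)
        · exact Finset.mem_range.mpr (by have := (hBfact a h).1; omega)
      have h2 : (A ∪ B').card ≤ k - 1 := le_trans (Finset.card_le_card hsub2) (by simp)
      have := Finset.card_union_add_card_inter A B'
      omega
  · -- strengthened bound when strictly above the parabola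
    intro hw
    rw [hsplit, Finset.card_union_of_disjoint hdisj, ← hBcard]
    have hdisj2 : Disjoint A B' := by
      rw [Finset.disjoint_left]
      intro a ha hb
      have := hinter a (Finset.mem_inter.mpr ⟨ha, hb⟩)
      nlinarith [this.2]
    by_contra hcon
    have hge : k ≤ A.card + B'.card := by omega
    have hcard : (A ∪ B').card = A.card + B'.card := Finset.card_union_of_disjoint hdisj2
    have hfull : A ∪ B' = Finset.range k := by
      apply Finset.eq_of_subset_of_card_le hsub
      rw [hcard]; simpa using hge
    -- the chain argument
    have hchain : ∀ j, j ≤ k - 1 → (k - 1 - j) ∈ A := by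
      intro j
      induction j with
      | zero =>
        intro _
        have hmem : k - 1 ∈ A ∪ B' := by
          rw [hfull]; exact Finset.mem_range.mpr (by omega)
        rcases Finset.mem_union.mp hmem with h | h
        · simpa using h
        · have := (hBfact _ h).1; omega
      | succ j ih =>
        intro hj
        have hprev : (k - 1 - j) ∈ A := ih (by omega)
        have hmem : k - 1 - (j+1) ∈ A ∪ B' := by
          rw [hfull]; exact Finset.mem_range.mpr (by omega)
        rcases Finset.mem_union.mp hmem with h | h
        · exact h
        · exfalso
          set m := k - 1 - (j+1) with hm
          have hm1 : k - 1 - j = m + 1 := by omega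
          obtain ⟨_, ha1, ha2, ha3⟩ := hAfact (m+1) (hm1 ▸ hprev)
          obtain ⟨_, hb1⟩ := hBfact m h
          have hc : ((m+1 : ℕ) : ℝ) = (m:ℝ) + 1 := by push_cast; ring
          rw [hc] at ha1 ha2 ha3
          nlinarith [ha2, ha3, hb1, hw]
    have h0 : 0 ∈ A := by have := hchain (k-1) (le_refl _); simpa [Nat.sub_self] using this
    have hk1 : k - 1 ∈ A := by have := hchain 0 (by omega); simpa using this
    obtain ⟨_, hz1, hz2, hz3⟩ := hAfact 0 h0
    obtain ⟨_, hy1, hy2, hy3⟩ := hAfact (k-1) hk1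
    have hck : ((k - 1 : ℕ) : ℝ) = (k:ℝ) - 1 := by
      have h1 : (k - 1) + 1 = k := by omega
      have h2 := congrArg (fun n : ℕ => (n:ℝ)) h1
      push_cast at h2; linarith
    rw [hck] at hy1 hy2 hy3
    simp only [Nat.cast_zero] at hz1 hz2 hz3
    nlinarith [hz2, hy1, hy3, hw]

lemma count_caps (hk : 2 ≤ k) (x : ℝ × ℝ) :
    ((Finset.range (2*k-1)).filter (fun t => x ∈ capS k t)).card ≤ k :=
  (count_caps_core hk x).1

lemma count_caps_pos (hk : 2 ≤ k) (x : ℝ × ℝ) (hw : x.1^2 < x.2) :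
    ((Finset.range (2*k-1)).filter (fun t => x ∈ capS k t)).card ≤ k - 1 :=
  (count_caps_core hk x).2 hw

end TwoK
namespace TwoK

variable {k t m e : ℕ}

lemma mem_Wset_iff (hk : 2 ≤ k) (ht : t < 2*k-1) (hm : m < 2*k-1) :
    m ∈ Wset k t ↔ (t ≤ m ∧ m ≤ t + k - 1) ∨ (k ≤ t ∧ m ≤ t - k) := by
  unfold Wset
  split <;> simp only [Finset.mem_Icc, Finset.mem_union] <;> omega

/-- the k caps containing vertex m -/
def VC (k m : ℕ) : Finset ℕ :=
  (Finset.range k).image (fun j => if j ≤ m then m - j else m + (2*k-1) - j)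

lemma VC_card (hk : 2 ≤ k) (hm : m < 2*k-1) : (VC k m).card = k := by
  rw [VC, Finset.card_image_of_injOn, Finset.card_range]
  intro a ha b hb hab
  simp only [Finset.mem_coe, Finset.mem_range] at ha hb
  simp only at hab
  split at hab <;> split at hab <;> omega

lemma VC_mem (hk : 2 ≤ k) (hm : m < 2*k-1) :
    ∀ t ∈ VC k m, t < 2*k-1 ∧ m ∈ Wset k t := by
  intro t ht
  rw [VC, Finset.mem_image] at ht
  obtain ⟨j, hj, rfl⟩ := ht
  rw [Finset.mem_range] at hj
  by_cases hjm : j ≤ m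
  · rw [if_pos hjm]
    refine ⟨by omega, ?_⟩
    rw [mem_Wset_iff hk (by omega) hm]
    omega
  · rw [if_neg hjm]
    refine ⟨by omega, ?_⟩
    rw [mem_Wset_iff hk (by omega) hm]
    omega

/-- the k-1 caps containing edge e -/
def ECf (k e : ℕ) : Finset ℕ :=
  (Finset.range (k-1)).image (fun j => if j ≤ e then e - j else e + (2*k-1) - j)

lemma ECf_card (hk : 2 ≤ k) (he : e < 2*k-1) : (ECf k e).card = k - 1 := by
  rw [ECf, Finset.card_image_of_injOn, Finset.card_range]
  intro a ha b hb hab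
  simp only [Finset.mem_coe, Finset.mem_range] at ha hb
  simp only at hab
  split at hab <;> split at hab <;> omega

lemma ECf_mem (hk : 2 ≤ k) (he : e < 2*k-1) :
    ∀ t ∈ ECf k e, t < 2*k-1 ∧ qfun k e ∈ capS k t := by
  intro t ht
  rw [ECf, Finset.mem_image] at ht
  obtain ⟨j, hj, rfl⟩ := ht
  rw [Finset.mem_range] at hj
  by_cases he2 : e < 2*k-2
  · -- ordinary edge, endpoints e and e+1
    by_cases hjm : j ≤ e
    · rw [if_pos hjm]
      refine ⟨by omega, ?_⟩
      apply edge_mem_of hk he2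
      · rw [mem_Wset_iff hk (by omega) (by omega)]; omega
      · rw [mem_Wset_iff hk (by omega) (by omega)]; omega
    · rw [if_neg hjm]
      refine ⟨by omega, ?_⟩
      apply edge_mem_of hk he2
      · rw [mem_Wset_iff hk (by omega) (by omega)]; omega
      · rw [mem_Wset_iff hk (by omega) (by omega)]; omega
  · -- apex edge e = 2k-2, endpoints 0 and 2k-2
    have hee : e = 2*k-2 := by omega
    have hjm : j ≤ e := by omega
    rw [if_pos hjm]
    refine ⟨by omega, ?_⟩
    subst hee
    apply edge_mem_of' hk
    · rw [mem_Wset_iff hk (by omega) (by omega)]; omega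
    · rw [mem_Wset_iff hk (by omega) (by omega)]; omega

lemma qfun_mem_DD (hk : 2 ≤ k) (he : e < 2*k-1) : qfun k e ∈ DD k := by
  apply subset_convexHull
  simp only [Finset.coe_image, Set.mem_image, Finset.mem_coe, Finset.mem_range]
  exact ⟨e, he, rfl⟩

lemma exists_free_vertex (hk : 2 ≤ k) (ht : t < 2*k-1) :
    ∃ m, m < 2*k-1 ∧ m ∉ Wset k t := by
  by_contra h
  push_neg at h
  have hsub : Finset.range (2*k-1) ⊆ Wset k t := fun m hm => h m (Finset.mem_range.mp hm)
  have h1 := Finset.card_le_card hsub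
  rw [Finset.card_range] at h1
  have h2 := card_Wset_le hk ht
  omega

lemma exists_free_edge (hk : 2 ≤ k) {t s : ℕ} (ht : t < 2*k-1) (hs : s < 2*k-1) :
    ∃ e, e < 2*k-1 ∧ e ∉ ISet k t ∧ e ∉ ISet k s := by
  by_contra h
  push_neg at h
  have hsub : Finset.range (2*k-1) ⊆ ISet k t ∪ ISet k s := by
    intro e he
    rw [Finset.mem_range] at he
    rcases Classical.em (e ∈ ISet k t) with h1 | h1
    · exact Finset.mem_union_left _ h1
    · exact Finset.mem_union_right _ (h e he h1)
  have h1 := Finset.card_le_card hsub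
  rw [Finset.card_range] at h1
  have h2 := Finset.card_union_le (ISet k t) (ISet k s)
  have h3 := card_ISet_le hk ht
  have h4 := card_ISet_le hk hs
  omega

end TwoK
namespace TwoK

variable {k : ℕ}

lemma Fam_eq_cap {i : Fin (2*k)} (hi : (i:ℕ) < 2*k-1) : Fam k i = capS k i := if_pos hi
lemma Fam_eq_DD {i : Fin (2*k)} (hi : ¬ ((i:ℕ) < 2*k-1)) : Fam k i = DD k := if_neg hi

/-- the natural embedding of indices -/
def toFin (k : ℕ) (hk : 2 ≤ k) (t : ℕ) : Fin (2*k) := ⟨t % (2*k), Nat.mod_lt _ (by omega)⟩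

lemma toFin_val (hk : 2 ≤ k) {t : ℕ} (ht : t < 2*k) : ((toFin k hk t : Fin (2*k)) : ℕ) = t := by
  simp only [toFin]; exact Nat.mod_eq_of_lt ht

lemma Fam_cover (hk : 2 ≤ k) (x : ℝ × ℝ) : ({i : Fin (2*k) | x ∈ Fam k i}).ncard ≤ k := by
  classical
  have hset : {i : Fin (2*k) | x ∈ Fam k i}
      = ↑(Finset.univ.filter (fun i : Fin (2*k) => x ∈ Fam k i)) := by
    ext i; simp
  rw [hset, Set.ncard_coe_finset]
  set T := Finset.univ.filter (fun i : Fin (2*k) => x ∈ Fam k i) with hT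
  have hsplitc := Finset.card_filter_add_card_filter_not
    (s := T) (p := fun i : Fin (2*k) => (i:ℕ) < 2*k-1)
  set T1 := T.filter (fun i : Fin (2*k) => (i:ℕ) < 2*k-1) with hT1
  set T2 := T.filter (fun i : Fin (2*k) => ¬ ((i:ℕ) < 2*k-1)) with hT2
  have hT2card : T2.card ≤ 1 := by
    apply Finset.card_le_one.mpr
    intro a ha b hb
    rw [hT2, Finset.mem_filter] at ha hb
    have h1 : (a:ℕ) < 2*k := a.2
    have h2 : (b:ℕ) < 2*k := b.2
    apply Fin.val_injective; omega
  have hT1card : T1.card ≤ ((Finset.range (2*k-1)).filter (fun t => x ∈ capS k t)).card := by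
    have hmaps : ∀ i ∈ T1, (i:ℕ) ∈ (Finset.range (2*k-1)).filter (fun t => x ∈ capS k t) := by
      intro i hi
      rw [hT1, Finset.mem_filter, hT, Finset.mem_filter] at hi
      obtain ⟨⟨_, hmem⟩, hlt⟩ := hi
      rw [Fam_eq_cap hlt] at hmem
      rw [Finset.mem_filter, Finset.mem_range]
      exact ⟨hlt, hmem⟩
    have hinj : (↑T1 : Set (Fin (2*k))).InjOn (fun i : Fin (2*k) => (i:ℕ)) := by
      intro a _ b _ hab
      exact Fin.val_injective hab
    exact Finset.card_le_card_of_injOn _ hmaps hinj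
  by_cases hD : x ∈ DD k
  · have hw : x.1^2 < x.2 := by
      have := DD_epi hk hD
      simp only [Set.mem_setOf_eq] at this
      linarith
    have := count_caps_pos hk x hw
    omega
  · have hT2emp : T2 = ∅ := by
      rw [Finset.eq_empty_iff_forall_notMem]
      intro a ha
      rw [hT2, Finset.mem_filter, hT, Finset.mem_filter] at ha
      obtain ⟨⟨_, hmem⟩, hge⟩ := ha
      rw [Fam_eq_DD hge] at hmem
      exact hD hmem
    have := count_caps hk x
    rw [hT2emp] at hsplitc
    simp at hsplitc
    omega

lemma vertex_cover_ge (hk : 2 ≤ k) {m : ℕ} (hm : m < 2*k-1) :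
    k ≤ ({l : Fin (2*k) | vfun m ∈ Fam k l}).ncard := by
  classical
  have hset : {l : Fin (2*k) | vfun m ∈ Fam k l}
      = ↑(Finset.univ.filter (fun l : Fin (2*k) => vfun m ∈ Fam k l)) := by
    ext i; simp
  rw [hset, Set.ncard_coe_finset]
  have hinj : (↑(VC k m) : Set ℕ).InjOn (toFin k hk) := by
    intro a ha b hb hab
    have h1 := (VC_mem hk hm a ha).1
    have h2 := (VC_mem hk hm b hb).1
    have hv := congrArg Fin.val hab
    rw [toFin_val hk (show a < 2*k by omega), toFin_val hk (show b < 2*k by omega)] at hv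
    exact hv
  have hmaps : ∀ t ∈ VC k m, toFin k hk t ∈ Finset.univ.filter (fun l : Fin (2*k) => vfun m ∈ Fam k l) := by
    intro t ht
    obtain ⟨hlt, hmem⟩ := VC_mem hk hm t ht
    rw [Finset.mem_filter]
    refine ⟨Finset.mem_univ _, ?_⟩
    have hv : ((toFin k hk t : Fin (2*k)) : ℕ) = t := toFin_val hk (by omega)
    rw [Fam_eq_cap (by rw [hv]; omega), hv]
    exact vertex_mem hmem
  have := Finset.card_le_card_of_injOn (toFin k hk) hmaps hinj
  rw [VC_card hk hm] at this
  exact this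

lemma edge_cover_ge (hk : 2 ≤ k) {e : ℕ} (he : e < 2*k-1) :
    k ≤ ({l : Fin (2*k) | qfun k e ∈ Fam k l}).ncard := by
  classical
  have hset : {l : Fin (2*k) | qfun k e ∈ Fam k l}
      = ↑(Finset.univ.filter (fun l : Fin (2*k) => qfun k e ∈ Fam k l)) := by
    ext i; simp
  rw [hset, Set.ncard_coe_finset]
  set lastI : Fin (2*k) := ⟨2*k-1, by omega⟩ with hlast
  set G : Finset (Fin (2*k)) := (ECf k e).image (toFin k hk) ∪ {lastI} with hG
  have hGsub : G ⊆ Finset.univ.filter (fun l : Fin (2*k) => qfun k e ∈ Fam k l) := by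
    intro a ha
    rw [Finset.mem_filter]
    refine ⟨Finset.mem_univ _, ?_⟩
    rw [hG, Finset.mem_union, Finset.mem_image] at ha
    rcases ha with ⟨t, ht, rfl⟩ | ha
    · obtain ⟨hlt, hmem⟩ := ECf_mem hk he t ht
      have hv : ((toFin k hk t : Fin (2*k)) : ℕ) = t := toFin_val hk (by omega)
      rw [Fam_eq_cap (by rw [hv]; omega), hv]
      exact hmem
    · rw [Finset.mem_singleton] at ha
      subst ha
      rw [Fam_eq_DD (by simp only [hlast]; omega)]
      exact qfun_mem_DD hk he
  have hGcard : k ≤ G.card := by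
    rw [hG, Finset.card_union_of_disjoint]
    · have himg : ((ECf k e).image (toFin k hk)).card = k - 1 := by
        rw [Finset.card_image_of_injOn, ECf_card hk he]
        intro a ha b hb hab
        have h1 := (ECf_mem hk he a ha).1
        have h2 := (ECf_mem hk he b hb).1
        have hv := congrArg Fin.val hab
        rw [toFin_val hk (show a < 2*k by omega), toFin_val hk (show b < 2*k by omega)] at hv
        exact hv
      rw [himg, Finset.card_singleton]
      omega
    · rw [Finset.disjoint_singleton_right, Finset.mem_image]
      rintro ⟨t, ht, habs⟩
      have h1 := (ECf_mem hk he t ht).1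
      have hv := congrArg Fin.val habs
      rw [toFin_val hk (show t < 2*k by omega)] at hv
      simp only [hlast] at hv
      omega
  calc k ≤ G.card := hGcard
    _ ≤ _ := Finset.card_le_card hGsub

end TwoK
namespace TwoK

lemma Fam_compact (k : ℕ) (i : Fin (2*k)) : IsCompact (Fam k i) := by
  unfold Fam; split
  · exact isCompact_capS _ _
  · exact isCompact_DD _

lemma Fam_convex (k : ℕ) (i : Fin (2*k)) : Convex ℝ (Fam k i) := by
  unfold Fam; split
  · exact convex_capS _ _
  · exact convex_DD _

end TwoK

/-- For every `k ≥ 2` there are `2k` compact convex planar sets such that no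
point is covered more than `k` times, yet no two of the sets together contain
all `k`-covered points. -/
theorem two_k_construction (k : ℕ) (hk : 2 ≤ k) :
    ∃ F : Fin (2 * k) → Set (ℝ × ℝ),
      (∀ i, IsCompact (F i)) ∧ (∀ i, Convex ℝ (F i)) ∧
      (∀ x : ℝ × ℝ, ({i | x ∈ F i} : Set (Fin (2 * k))).ncard ≤ k) ∧
      ¬ ∃ i j : Fin (2 * k), ∀ x : ℝ × ℝ,
          k ≤ ({l | x ∈ F l} : Set (Fin (2 * k))).ncard → x ∈ F i ∪ F j := by
  refine ⟨TwoK.Fam k, TwoK.Fam_compact k, TwoK.Fam_convex k, TwoK.Fam_cover hk, ?_⟩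
  rintro ⟨i, j, hcov⟩
  by_cases hi : (i:ℕ) < 2*k-1
  · by_cases hj : (j:ℕ) < 2*k-1
    · -- both caps : use a free edge midpoint
      obtain ⟨e, he, he1, he2⟩ := TwoK.exists_free_edge hk hi hj
      have hmem := hcov (TwoK.qfun k e) (TwoK.edge_cover_ge hk he)
      rcases hmem with h | h
      · rw [TwoK.Fam_eq_cap hi] at h
        exact TwoK.edge_not_mem hk hi he he1 h
      · rw [TwoK.Fam_eq_cap hj] at h
        exact TwoK.edge_not_mem hk hj he he2 h
    · -- i cap, j = D : use a free vertex
      obtain ⟨m, hm, hm1⟩ := TwoK.exists_free_vertex hk hi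
      have hmem := hcov (TwoK.vfun m) (TwoK.vertex_cover_ge hk hm)
      rcases hmem with h | h
      · rw [TwoK.Fam_eq_cap hi] at h
        exact TwoK.vertex_not_mem hk hi hm hm1 h
      · rw [TwoK.Fam_eq_DD hj] at h
        exact TwoK.qfun_not_mem_DD_of_vertex hk m h
  · by_cases hj : (j:ℕ) < 2*k-1
    · obtain ⟨m, hm, hm1⟩ := TwoK.exists_free_vertex hk hj
      have hmem := hcov (TwoK.vfun m) (TwoK.vertex_cover_ge hk hm)
      rcases hmem with h | h
      · rw [TwoK.Fam_eq_DD hi] at h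
        exact TwoK.qfun_not_mem_DD_of_vertex hk m h
      · rw [TwoK.Fam_eq_cap hj] at h
        exact TwoK.vertex_not_mem hk hj hm hm1 h
    · -- both D : any vertex works
      have h0 : (0:ℕ) < 2*k-1 := by omega
      have hmem := hcov (TwoK.vfun 0) (TwoK.vertex_cover_ge hk h0)
      rcases hmem with h | h
      · rw [TwoK.Fam_eq_DD hi] at h
        exact TwoK.qfun_not_mem_DD_of_vertex hk 0 h
      · rw [TwoK.Fam_eq_DD hj] at h
        exact TwoK.qfun_not_mem_DD_of_vertex hk 0 h

end TwoKSection
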